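/- Let b ∈ B_Γ be supermodular on ℝ^k (i.e., b(x ∨ y) + b(x ∧ y) ≥ b(x) + b(y) for all x,y, where ∨ and ∧ are the coordinatewise maximum and minimum). Then for every x ∈ ℝ_+^k the subdifferential ∂b(x) has a coordinatewise-greatest element q*(x), this element belongs to Γ, and the map x ↦ q*(x) is monotone: q*(y) ≥ q*(x) coordinatewise whenever y ≥ x coordinatewise in ℝ_+^k. -/

import Mathlib

open MeasureTheory Filter

noncomputable section

abbrev E (k : ℕ) := EuclideanSpace ℝ (Fin k)

def orthant (k : ℕ) : Set (E k) := {x | ∀ i, 0 ≤ x i}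

/-- The dot product `g · x` on `ℝ^k`. -/
def dotp {k : ℕ} (g x : E k) : ℝ := ∑ i, g i * x i

def IsAlloc {k : ℕ} (Γ : Set (E k)) (q : E k → E k) : Prop :=
  ∀ x ∈ orthant k, q x ∈ Γ

def IsIC {k : ℕ} (q : E k → E k) (s : E k → ℝ) : Prop :=
  ∀ x ∈ orthant k, ∀ y ∈ orthant k, dotp (q x) x - s x ≥ dotp (q y) x - s y

def IsIR {k : ℕ} (q : E k → E k) (s : E k → ℝ) : Prop :=
  ∀ x ∈ orthant k, 0 ≤ dotp (q x) x - s x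

def IsNPT {k : ℕ} (s : E k → ℝ) : Prop :=
  ∀ x ∈ orthant k, 0 ≤ s x

/-- The set of subgradients of `f` at `x`. -/
def Subgrad {k : ℕ} (f : E k → ℝ) (x : E k) : Set (E k) :=
  {g | ∀ y, f y - f x ≥ dotp g (y - x)}

/-- `b ∈ B_Γ`: convex on `ℝ^k`, `b 0 = 0`, and a subgradient in `Γ` at every point. -/
def BClass {k : ℕ} (Γ : Set (E k)) (b : E k → ℝ) : Prop :=
  ConvexOn ℝ Set.univ b ∧ b 0 = 0 ∧ ∀ x, (Subgrad b x ∩ Γ).Nonempty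

/-- One-sided directional derivative `f′(x;y) = lim_{δ→0⁺} (f(x+δy)-f(x))/δ`. -/
def dirDeriv {k : ℕ} (b : E k → ℝ) (x y : E k) : ℝ :=
  limUnder (nhdsWithin (0:ℝ) (Set.Ioi 0)) fun δ => (b (x + δ • y) - b x) / δ

/-- The extended buyer payoff function `b(x) = sup_{z ∈ ℝ₊^k} [q(z)·x − s(z)]`. -/
def extPayoff {k : ℕ} (q : E k → E k) (s : E k → ℝ) (x : E k) : ℝ :=
  sSup ((fun z => dotp (q z) x - s z) '' orthant k)

def SellerFavorable {k : ℕ} (q : E k → E k) (s : E k → ℝ) : Prop :=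
  ∀ x ∈ orthant k, s x = dirDeriv (extPayoff q s) x x - extPayoff q s x

/-- Coordinatewise maximum of two vectors in `ℝ^k`. -/
def cmax {k : ℕ} (x y : E k) : E k := WithLp.toLp 2 (fun i => max (x i) (y i))

/-- Coordinatewise minimum of two vectors in `ℝ^k`. -/
def cmin {k : ℕ} (x y : E k) : E k := WithLp.toLp 2 (fun i => min (x i) (y i))

/-- A supermodular function on `ℝ^k`. -/
def Supermodular {k : ℕ} (b : E k → ℝ) : Prop :=
  ∀ x y : E k, b (cmax x y) + b (cmin x y) ≥ b x + b y

def onesV (k : ℕ) : E k := WithLp.toLp 2 (fun _ => (1:ℝ))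

def seqPt {k : ℕ} (x : E k) (n : ℕ) : E k := x + (1 / (n + 1 : ℝ)) • onesV k

lemma seqPt_apply {k : ℕ} (x : E k) (n : ℕ) (j : Fin k) :
    seqPt x n j = x j + 1 / (n + 1 : ℝ) := by
  simp [seqPt, onesV, PiLp.add_apply, PiLp.smul_apply]

lemma seqPt_tendsto {k : ℕ} (x : E k) :
    Filter.Tendsto (seqPt x) Filter.atTop (nhds x) := by
  have h : Filter.Tendsto (fun n : ℕ => x + (1 / (n + 1 : ℝ)) • onesV k)
      Filter.atTop (nhds (x + (0:ℝ) • onesV k)) :=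
    (tendsto_one_div_add_atTop_nhds_zero_nat.smul_const (onesV k)).const_add x
  rw [zero_smul, add_zero] at h
  exact h

lemma key_mono {k : ℕ} {b : E k → ℝ} (hsm : Supermodular b)
    {u v : E k} (huv : ∀ j, u j ≤ v j) {i : Fin k} (hi : u i < v i)
    {g h : E k} (hg : g ∈ Subgrad b u) (hh : h ∈ Subgrad b v) : g i ≤ h i := by
  classical
  set a : E k := WithLp.toLp 2 (fun j => if j = i then v i else u j) with ha
  set c : E k := WithLp.toLp 2 (fun j => if j = i then u i else v j) with hc
  have hmax : cmax a c = v := by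
    ext j
    by_cases hj : j = i
    · subst hj; simp [cmax, ha, hc, max_eq_left hi.le]
    · simp [cmax, ha, hc, hj, max_eq_right (huv j)]
  have hmin : cmin a c = u := by
    ext j
    by_cases hj : j = i
    · subst hj; simp [cmin, ha, hc, min_eq_right hi.le]
    · simp [cmin, ha, hc, hj, min_eq_left (huv j)]
  have hs := hsm a c
  rw [hmax, hmin] at hs
  have h1 : b a - b u ≥ dotp g (a - u) := hg a
  have h2 : b c - b v ≥ dotp h (c - v) := hh c
  have e1 : dotp g (a - u) = g i * (v i - u i) := by
    unfold dotp
    rw [Finset.sum_eq_single i]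
    · simp [PiLp.sub_apply, ha]
    · intro j _ hj; simp [PiLp.sub_apply, ha, hj]
    · simp
  have e2 : dotp h (c - v) = h i * (u i - v i) := by
    unfold dotp
    rw [Finset.sum_eq_single i]
    · simp [PiLp.sub_apply, hc]
    · intro j _ hj; simp [PiLp.sub_apply, hc, hj]
    · simp
  rw [e1] at h1
  rw [e2] at h2
  nlinarith [sub_pos.mpr hi]
/-- for supermodular `b ∈ B_Γ`, at every `x ∈ ℝ₊^k` the
subdifferential `∂b(x)` has a coordinatewise-greatest element `q*(x)`, which lies
in `Γ`, and `x ↦ q*(x)` is monotone. -/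
theorem stmt11 {k : ℕ} (hk : 1 ≤ k) (Γ : Set (E k)) (hΓne : Γ.Nonempty)
    (hΓc : IsCompact Γ) (hΓ : Γ ⊆ orthant k)
    (b : E k → ℝ) (hb : BClass Γ b) (hsm : Supermodular b) :
    ∃ qs : E k → E k,
      (∀ x ∈ orthant k,
        qs x ∈ Subgrad b x ∧ qs x ∈ Γ ∧
        ∀ g ∈ Subgrad b x, ∀ i, g i ≤ qs x i) ∧
      (∀ x ∈ orthant k, ∀ y ∈ orthant k, (∀ i, x i ≤ y i) →
        ∀ i, qs x i ≤ qs y i) := by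
  classical
  obtain ⟨hconv, hb0, hsub⟩ := hb
  have hbcont : Continuous b := by
    have h := hconv.continuousOn isOpen_univ
    exact continuousOn_univ.mp h
  choose G hG using hsub
  have hGsub : ∀ x, G x ∈ Subgrad b x := fun x => (hG x).1
  have hGΓ : ∀ x, G x ∈ Γ := fun x => (hG x).2
  -- for each x, extract a convergent subsequence of subgradients at perturbed points
  choose q hqΓ φ hφmono hφlim using
    fun x : E k => hΓc.tendsto_subseq (fun n => hGΓ (seqPt x n))
  -- continuity of the dot product
  have hdotp : Continuous (fun p : E k × E k => dotp p.1 p.2) := by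
    unfold dotp
    exact continuous_finset_sum _ fun j _ =>
      (((EuclideanSpace.proj (𝕜 := ℝ) j).continuous.comp continuous_fst).mul
        ((EuclideanSpace.proj (𝕜 := ℝ) j).continuous.comp continuous_snd))
  have hproj : ∀ j : Fin k, Continuous (fun y : E k => y j) := fun j =>
    (EuclideanSpace.proj (𝕜 := ℝ) j).continuous
  -- basic convergence facts
  have hzt : ∀ x : E k, Filter.Tendsto (fun n => seqPt x (φ x n)) Filter.atTop (nhds x) :=
    fun x => (seqPt_tendsto x).comp (hφmono x).tendsto_atTop
  have hcoord : ∀ (x : E k) (i : Fin k),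
      Filter.Tendsto (fun n => G (seqPt x (φ x n)) i) Filter.atTop (nhds (q x i)) :=
    fun x i => ((hproj i).tendsto (q x)).comp (hφlim x)
  have hεpos : ∀ n : ℕ, 0 < 1 / (n + 1 : ℝ) := fun n => by positivity
  -- each q x is a subgradient at x
  have hqsub : ∀ x : E k, q x ∈ Subgrad b x := by
    intro x
    intro y
    have hseq : ∀ n, dotp (G (seqPt x (φ x n))) (y - seqPt x (φ x n))
        ≤ b y - b (seqPt x (φ x n)) := fun n => (hGsub (seqPt x (φ x n)) y)
    have hL : Filter.Tendsto (fun n => dotp (G (seqPt x (φ x n))) (y - seqPt x (φ x n)))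
        Filter.atTop (nhds (dotp (q x) (y - x))) := by
      have := (hdotp.tendsto (q x, y - x)).comp
        ((hφlim x).prodMk_nhds (tendsto_const_nhds.sub (hzt x)))
      exact this
    have hR : Filter.Tendsto (fun n => b y - b (seqPt x (φ x n))) Filter.atTop
        (nhds (b y - b x)) :=
      tendsto_const_nhds.sub ((hbcont.tendsto x).comp (hzt x))
    exact le_of_tendsto_of_tendsto' hL hR hseq
  -- each q x dominates all subgradients at x
  have hqdom : ∀ x : E k, ∀ g ∈ Subgrad b x, ∀ i, g i ≤ q x i := by
    intro x g hg i
    refine ge_of_tendsto' (hcoord x i) (fun n => ?_)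
    refine key_mono hsm (fun j => ?_) ?_ hg (hGsub (seqPt x (φ x n)))
    · rw [seqPt_apply]; linarith [hεpos (φ x n)]
    · rw [seqPt_apply]; linarith [hεpos (φ x n)]
  refine ⟨q, fun x _ => ⟨hqsub x, hqΓ x, hqdom x⟩, ?_⟩
  -- monotonicity
  intro x _ y _ hxy i
  refine ge_of_tendsto' (hcoord y i) (fun n => ?_)
  -- show q x i ≤ G (seqPt y (φ y n)) i
  have hev : ∀ᶠ m in Filter.atTop, φ y n < φ x m :=
    (hφmono x).tendsto_atTop.eventually_gt_atTop (φ y n)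
  refine le_of_tendsto (hcoord x i) (hev.mono fun m hm => ?_)
  have hlt : 1 / ((φ x m : ℝ) + 1) < 1 / ((φ y n : ℝ) + 1) := by
    apply one_div_lt_one_div_of_lt
    · positivity
    · exact_mod_cast by omega
  refine key_mono hsm (fun j => ?_) ?_ (hGsub (seqPt x (φ x m))) (hGsub (seqPt y (φ y n)))
  · rw [seqPt_apply, seqPt_apply]
    have := hxy j
    linarith
  · rw [seqPt_apply, seqPt_apply]
    have := hxy i
    linarith
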